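/- Let b > 2 be real, and let μ_b denote the probability measure on ℝ given by μ_b = (2/(2+b))·δ_{-2} + (2/(2+b))·δ_{-1} + ((b-2)/(2+b))·δ_1, where δ_x is the Dirac mass at x. Let (Ω, F, P) be a probability space with a filtration (F_n)_{n≥0}, and let (V_n)_{n≥1} be a sequence of random variables such that V_n is F_n-measurable, V_n takes values in {-2, -1, 1}, and almost surely P(V_n = -2 | F_{n-1}) ≤ 2/(2+b) and P(V_n = -1 | F_{n-1}) ≤ 2/(2+b). Then for every n ≥ 1 and every real t, P(V_1 + V_2 + ⋯ + V_n ≤ t) ≤ μ_b^{*n}((-∞, t]), where μ_b^{*n} denotes the n-fold convolution of μ_b with itself. In other words, V_1 + ⋯ + V_n stochastically dominates the sum of n i.i.d. random variables with law μ_b. -/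

import Mathlib

open MeasureTheory

/-- The comparison measure μ_b = (2/(2+b))·δ₋₂ + (2/(2+b))·δ₋₁ + ((b-2)/(2+b))·δ₁ on ℝ. -/
noncomputable def muB (b : ℝ) : Measure ℝ :=
  ENNReal.ofReal (2 / (2 + b)) • Measure.dirac (-2)
    + ENNReal.ofReal (2 / (2 + b)) • Measure.dirac (-1)
    + ENNReal.ofReal ((b - 2) / (2 + b)) • Measure.dirac 1

/-- n-fold convolution power of a measure on ℝ (with `μ^{*0}` the Dirac mass at 0). -/
noncomputable def convPow (μ : Measure ℝ) : ℕ → Measure ℝ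
  | 0 => Measure.dirac 0
  | n + 1 => (convPow μ n).conv μ

instance muB_finite (b : ℝ) : IsFiniteMeasure (muB b) := by
  constructor
  simp only [muB, Measure.add_apply, Measure.smul_apply, smul_eq_mul, measure_univ, mul_one]
  exact ENNReal.add_lt_top.2 ⟨ENNReal.add_lt_top.2 ⟨ENNReal.ofReal_lt_top,
    ENNReal.ofReal_lt_top⟩, ENNReal.ofReal_lt_top⟩

lemma convPow_finite (μ : Measure ℝ) [IsFiniteMeasure μ] :
    ∀ n, IsFiniteMeasure (convPow μ n)
  | 0 => by rw [convPow]; infer_instance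
  | n + 1 => by rw [convPow]; have := convPow_finite μ n; infer_instance

lemma conv_muB_Iic (b : ℝ) (ν : Measure ℝ) [SFinite ν] (t : ℝ) :
    (ν.conv (muB b)) (Set.Iic t)
      = ENNReal.ofReal (2 / (2 + b)) * ν (Set.Iic (t + 2))
        + ENNReal.ofReal (2 / (2 + b)) * ν (Set.Iic (t + 1))
        + ENNReal.ofReal ((b - 2) / (2 + b)) * ν (Set.Iic (t - 1)) := by
  have hmeas : Measurable fun p : ℝ × ℝ => p.1 + p.2 := measurable_add
  have hset : MeasurableSet ((fun p : ℝ × ℝ => p.1 + p.2) ⁻¹' Set.Iic t) :=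
    hmeas measurableSet_Iic
  rw [Measure.conv, Measure.map_apply hmeas measurableSet_Iic,
    Measure.prod_apply hset]
  have hptw : ∀ x : ℝ, muB b (Prod.mk x ⁻¹' ((fun p : ℝ × ℝ => p.1 + p.2) ⁻¹' Set.Iic t))
      = ENNReal.ofReal (2 / (2 + b)) * (Set.Iic (t + 2)).indicator 1 x
        + ENNReal.ofReal (2 / (2 + b)) * (Set.Iic (t + 1)).indicator 1 x
        + ENNReal.ofReal ((b - 2) / (2 + b)) * (Set.Iic (t - 1)).indicator 1 x := by
    intro x
    have hpre : Prod.mk x ⁻¹' ((fun p : ℝ × ℝ => p.1 + p.2) ⁻¹' Set.Iic t)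
        = Set.Iic (t - x) := by
      ext y
      simp only [Set.mem_preimage, Set.mem_Iic]
      constructor <;> intro h <;> linarith
    rw [hpre, muB]
    simp only [Measure.add_apply, Measure.smul_apply, Measure.dirac_apply, smul_eq_mul]
    have e2 : (Set.Iic (t - x)).indicator (1 : ℝ → ENNReal) (-2)
        = (Set.Iic (t + 2)).indicator 1 x := by
      simp only [Set.indicator_apply, Set.mem_Iic]
      exact if_congr (by constructor <;> intro h <;> linarith) rfl rfl
    have e1 : (Set.Iic (t - x)).indicator (1 : ℝ → ENNReal) (-1)
        = (Set.Iic (t + 1)).indicator 1 x := by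
      simp only [Set.indicator_apply, Set.mem_Iic]
      exact if_congr (by constructor <;> intro h <;> linarith) rfl rfl
    have e0 : (Set.Iic (t - x)).indicator (1 : ℝ → ENNReal) 1
        = (Set.Iic (t - 1)).indicator 1 x := by
      simp only [Set.indicator_apply, Set.mem_Iic]
      exact if_congr (by constructor <;> intro h <;> linarith) rfl rfl
    rw [e2, e1, e0]
  rw [lintegral_congr hptw]
  have m2 : Measurable fun x : ℝ =>
      ENNReal.ofReal (2 / (2 + b)) * (Set.Iic (t + 2)).indicator 1 x :=
    (measurable_one.indicator measurableSet_Iic).const_mul _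
  have m1 : Measurable fun x : ℝ =>
      ENNReal.ofReal (2 / (2 + b)) * (Set.Iic (t + 1)).indicator 1 x :=
    (measurable_one.indicator measurableSet_Iic).const_mul _
  rw [lintegral_add_right _ ((measurable_one.indicator measurableSet_Iic).const_mul _),
    lintegral_add_right _ ((measurable_one.indicator measurableSet_Iic).const_mul _),
    lintegral_const_mul _ (measurable_one.indicator measurableSet_Iic),
    lintegral_const_mul _ (measurable_one.indicator measurableSet_Iic),
    lintegral_const_mul _ (measurable_one.indicator measurableSet_Iic),
    lintegral_indicator_one measurableSet_Iic,
    lintegral_indicator_one measurableSet_Iic,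
    lintegral_indicator_one measurableSet_Iic]

lemma cond_bound {Ω : Type*} {m : MeasurableSpace Ω} {mΩ : MeasurableSpace Ω}
    (hm : m ≤ mΩ) (P : Measure Ω) [IsProbabilityMeasure P]
    {B A : Set Ω} (hB : MeasurableSet B)
    (hA : MeasurableSet[m] A) {a : ℝ}
    (hbound : ∀ᵐ ω ∂P, (P[B.indicator (fun _ => (1 : ℝ)) | m]) ω ≤ a) :
    (P (B ∩ A)).toReal ≤ a * (P A).toReal := by
  have hint : Integrable (B.indicator fun _ => (1 : ℝ)) P := (integrable_const 1).indicator hB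
  have h1 : (P (B ∩ A)).toReal = ∫ ω in A, B.indicator (fun _ => (1 : ℝ)) ω ∂P := by
    rw [setIntegral_indicator hB, setIntegral_const, smul_eq_mul, mul_one, Set.inter_comm]; rfl
  rw [h1, ← setIntegral_condExp hm hint hA]
  calc ∫ ω in A, (P[B.indicator (fun _ => (1 : ℝ)) | m]) ω ∂P
      ≤ ∫ _ω in A, a ∂P :=
        setIntegral_mono_ae integrable_condExp.integrableOn
          (integrable_const a).integrableOn hbound
    _ = a * (P A).toReal := by rw [setIntegral_const, smul_eq_mul, mul_comm]; rfl

theorem stochastic_domination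
    {Ω : Type*} {mΩ : MeasurableSpace Ω} (P : Measure Ω) [IsProbabilityMeasure P]
    (ℱ : Filtration ℕ mΩ) (b : ℝ) (hb : 2 < b)
    (V : ℕ → Ω → ℝ)
    (hmeas : ∀ n, 1 ≤ n → StronglyMeasurable[ℱ n] (V n))
    (hrange : ∀ n, 1 ≤ n → ∀ ω, V n ω = -2 ∨ V n ω = -1 ∨ V n ω = 1)
    (h2 : ∀ n, 1 ≤ n → ∀ᵐ ω ∂P,
      (P[Set.indicator {ω | V n ω = -2} (fun _ => (1 : ℝ)) | ℱ (n - 1)]) ω ≤ 2 / (2 + b))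
    (h1 : ∀ n, 1 ≤ n → ∀ᵐ ω ∂P,
      (P[Set.indicator {ω | V n ω = -1} (fun _ => (1 : ℝ)) | ℱ (n - 1)]) ω ≤ 2 / (2 + b))
    (n : ℕ) (hn : 1 ≤ n) (t : ℝ) :
    P {ω | ∑ i ∈ Finset.Icc 1 n, V i ω ≤ t} ≤ convPow (muB b) n (Set.Iic t) := by
  clear hn
  have hbpos : (0 : ℝ) < 2 + b := by linarith
  have ha0 : (0 : ℝ) ≤ 2 / (2 + b) := by positivity
  have ha'0 : (0 : ℝ) ≤ (b - 2) / (2 + b) := by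
    apply div_nonneg <;> linarith
  -- key induction in real numbers
  have key : ∀ k t, (P {ω | ∑ i ∈ Finset.Icc 1 k, V i ω ≤ t}).toReal
      ≤ ((convPow (muB b) k) (Set.Iic t)).toReal := by
    intro k
    induction k with
    | zero =>
      intro t
      rcases le_or_gt 0 t with h | h
      · have hs : {ω : Ω | ∑ i ∈ Finset.Icc 1 0, V i ω ≤ t} = Set.univ := by
          ext ω; simp [h]
        rw [hs, convPow]
        simp [Measure.dirac_apply, Set.indicator_apply, Set.mem_Iic, h]
      · have hs : {ω : Ω | ∑ i ∈ Finset.Icc 1 0, V i ω ≤ t} = ∅ := by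
          ext ω; simp; linarith
        rw [hs]
        simp
    | succ k ih =>
      intro t
      haveI : IsFiniteMeasure (convPow (muB b) k) := convPow_finite _ k
      have hne : (2 + b) ≠ 0 := ne_of_gt hbpos
      set ν := convPow (muB b) k with hν
      set B2 := {ω | V (k + 1) ω = -2} with hB2def
      set B1 := {ω | V (k + 1) ω = -1} with hB1def
      set B0 := {ω | V (k + 1) ω = 1} with hB0def
      set A2 := {ω : Ω | ∑ i ∈ Finset.Icc 1 k, V i ω ≤ t + 2} with hA2def
      set A1 := {ω : Ω | ∑ i ∈ Finset.Icc 1 k, V i ω ≤ t + 1} with hA1def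
      set A0 := {ω : Ω | ∑ i ∈ Finset.Icc 1 k, V i ω ≤ t - 1} with hA0def
      -- measurability
      have hVmeas : Measurable (V (k + 1)) :=
        ((hmeas (k + 1) (Nat.le_add_left 1 k)).mono (ℱ.le (k + 1))).measurable
      have hB2m : MeasurableSet B2 := by
        rw [hB2def]; exact hVmeas (measurableSet_singleton _)
      have hB1m : MeasurableSet B1 := by
        rw [hB1def]; exact hVmeas (measurableSet_singleton _)
      have hB0m : MeasurableSet B0 := by
        rw [hB0def]; exact hVmeas (measurableSet_singleton _)
      have hSmeas : StronglyMeasurable[ℱ k] (fun ω => ∑ i ∈ Finset.Icc 1 k, V i ω) := by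
        apply Finset.stronglyMeasurable_fun_sum
        intro i hi
        rcases Finset.mem_Icc.1 hi with ⟨hi1, hik⟩
        exact (hmeas i hi1).mono (ℱ.mono hik)
      have hA2mk : MeasurableSet[ℱ k] A2 := by
        rw [hA2def]; exact hSmeas.measurable measurableSet_Iic
      have hA1mk : MeasurableSet[ℱ k] A1 := by
        rw [hA1def]; exact hSmeas.measurable measurableSet_Iic
      have hA0mk : MeasurableSet[ℱ k] A0 := by
        rw [hA0def]; exact hSmeas.measurable measurableSet_Iic
      have hA2m : MeasurableSet A2 := ℱ.le k _ hA2mk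
      have hA1m : MeasurableSet A1 := ℱ.le k _ hA1mk
      have hA0m : MeasurableSet A0 := ℱ.le k _ hA0mk
      -- inclusions
      have hsub20 : A0 ⊆ A2 := by
        intro ω h
        simp only [hA0def, Set.mem_setOf_eq] at h
        simp only [hA2def, Set.mem_setOf_eq]
        linarith
      have hsub10 : A0 ⊆ A1 := by
        intro ω h
        simp only [hA0def, Set.mem_setOf_eq] at h
        simp only [hA1def, Set.mem_setOf_eq]
        linarith
      -- disjointness of the B's
      have hd21 : Disjoint B2 B1 := by
        rw [Set.disjoint_left]
        intro ω h2' h1'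
        simp only [hB2def, Set.mem_setOf_eq] at h2'
        simp only [hB1def, Set.mem_setOf_eq] at h1'
        rw [h2'] at h1'; norm_num at h1'
      have hd20 : Disjoint B2 B0 := by
        rw [Set.disjoint_left]
        intro ω h2' h1'
        simp only [hB2def, Set.mem_setOf_eq] at h2'
        simp only [hB0def, Set.mem_setOf_eq] at h1'
        rw [h2'] at h1'; norm_num at h1'
      have hd10 : Disjoint B1 B0 := by
        rw [Set.disjoint_left]
        intro ω h2' h1'
        simp only [hB1def, Set.mem_setOf_eq] at h2'
        simp only [hB0def, Set.mem_setOf_eq] at h1'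
        rw [h2'] at h1'; norm_num at h1'
      -- decomposition of the event
      have hsum : ∀ ω, ∑ i ∈ Finset.Icc 1 (k + 1), V i ω
          = (∑ i ∈ Finset.Icc 1 k, V i ω) + V (k + 1) ω := by
        intro ω
        exact Finset.sum_Icc_succ_top (Nat.le_add_left 1 k) _
      have hdecomp : {ω | ∑ i ∈ Finset.Icc 1 (k + 1), V i ω ≤ t}
          = (B2 ∩ A2) ∪ (B1 ∩ A1) ∪ (B0 ∩ A0) := by
        ext ω
        simp only [hB2def, hB1def, hB0def, hA2def, hA1def, hA0def, Set.mem_setOf_eq,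
          Set.mem_union, Set.mem_inter_iff, hsum ω]
        rcases hrange (k + 1) (Nat.le_add_left 1 k) ω with h | h | h <;>
          rw [h] <;> constructor <;> intro hh
        · exact Or.inl (Or.inl ⟨rfl, by linarith⟩)
        · rcases hh with (⟨h', hs⟩ | ⟨h', hs⟩) | ⟨h', hs⟩ <;> first | linarith | norm_num at h'
        · exact Or.inl (Or.inr ⟨rfl, by linarith⟩)
        · rcases hh with (⟨h', hs⟩ | ⟨h', hs⟩) | ⟨h', hs⟩ <;> first | linarith | norm_num at h'
        · exact Or.inr ⟨rfl, by linarith⟩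
        · rcases hh with (⟨h', hs⟩ | ⟨h', hs⟩) | ⟨h', hs⟩ <;> first | linarith | norm_num at h'
      have hPdecomp : P {ω | ∑ i ∈ Finset.Icc 1 (k + 1), V i ω ≤ t}
          = P (B2 ∩ A2) + P (B1 ∩ A1) + P (B0 ∩ A0) := by
        rw [hdecomp,
          measure_union (Disjoint.union_left (hd20.mono Set.inter_subset_left Set.inter_subset_left)
            (hd10.mono Set.inter_subset_left Set.inter_subset_left)) (hB0m.inter hA0m),
          measure_union (hd21.mono Set.inter_subset_left Set.inter_subset_left)
            (hB1m.inter hA1m)]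
      have hXdecomp : (P {ω | ∑ i ∈ Finset.Icc 1 (k + 1), V i ω ≤ t}).toReal
          = (P (B2 ∩ A2)).toReal + (P (B1 ∩ A1)).toReal + (P (B0 ∩ A0)).toReal := by
        rw [hPdecomp,
          ENNReal.toReal_add (ENNReal.add_ne_top.2 ⟨measure_ne_top _ _, measure_ne_top _ _⟩)
            (measure_ne_top _ _),
          ENNReal.toReal_add (measure_ne_top _ _) (measure_ne_top _ _)]
      -- splitting B2 ∩ A2 and B1 ∩ A1 along A0
      have hsplit2 : (P (B2 ∩ A2)).toReal
          = (P (B2 ∩ A0)).toReal + (P (B2 ∩ (A2 \ A0))).toReal := by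
        have hset : B2 ∩ A2 = (B2 ∩ A0) ∪ (B2 ∩ (A2 \ A0)) := by
          rw [← Set.inter_union_distrib_left, Set.union_diff_cancel hsub20]
        rw [hset, measure_union
          (disjoint_sdiff_self_right.mono Set.inter_subset_right Set.inter_subset_right)
          (hB2m.inter (hA2m.diff hA0m)),
          ENNReal.toReal_add (measure_ne_top _ _) (measure_ne_top _ _)]
      have hsplit1 : (P (B1 ∩ A1)).toReal
          = (P (B1 ∩ A0)).toReal + (P (B1 ∩ (A1 \ A0))).toReal := by
        have hset : B1 ∩ A1 = (B1 ∩ A0) ∪ (B1 ∩ (A1 \ A0)) := by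
          rw [← Set.inter_union_distrib_left, Set.union_diff_cancel hsub10]
        rw [hset, measure_union
          (disjoint_sdiff_self_right.mono Set.inter_subset_right Set.inter_subset_right)
          (hB1m.inter (hA1m.diff hA0m)),
          ENNReal.toReal_add (measure_ne_top _ _) (measure_ne_top _ _)]
      -- partition of A0 along the values of V (k+1)
      have hpart : (P A0).toReal
          = (P (B2 ∩ A0)).toReal + (P (B1 ∩ A0)).toReal + (P (B0 ∩ A0)).toReal := by
        have hset : A0 = (B2 ∩ A0) ∪ (B1 ∩ A0) ∪ (B0 ∩ A0) := by
          ext ω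
          simp only [hB2def, hB1def, hB0def, Set.mem_union, Set.mem_inter_iff, Set.mem_setOf_eq]
          constructor
          · intro h
            rcases hrange (k + 1) (Nat.le_add_left 1 k) ω with hv | hv | hv
            · exact Or.inl (Or.inl ⟨hv, h⟩)
            · exact Or.inl (Or.inr ⟨hv, h⟩)
            · exact Or.inr ⟨hv, h⟩
          · rintro ((⟨_, h⟩ | ⟨_, h⟩) | ⟨_, h⟩) <;> exact h
        rw [hset,
          measure_union (Disjoint.union_left (hd20.mono Set.inter_subset_left Set.inter_subset_left)
            (hd10.mono Set.inter_subset_left Set.inter_subset_left)) (hB0m.inter hA0m),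
          measure_union (hd21.mono Set.inter_subset_left Set.inter_subset_left)
            (hB1m.inter hA0m),
          ENNReal.toReal_add (ENNReal.add_ne_top.2 ⟨measure_ne_top _ _, measure_ne_top _ _⟩)
            (measure_ne_top _ _),
          ENNReal.toReal_add (measure_ne_top _ _) (measure_ne_top _ _)]
        rw [← hset]
      -- conditional bounds
      have hb2' := h2 (k + 1) (Nat.le_add_left 1 k)
      simp only [Nat.add_sub_cancel] at hb2'
      rw [← hB2def] at hb2'
      have c2 := cond_bound (ℱ.le k) P hB2m (hA2mk.diff hA0mk) hb2'
      have hb1' := h1 (k + 1) (Nat.le_add_left 1 k)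
      simp only [Nat.add_sub_cancel] at hb1'
      rw [← hB1def] at hb1'
      have c1 := cond_bound (ℱ.le k) P hB1m (hA1mk.diff hA0mk) hb1'
      -- measure differences
      have w2 : (P A2).toReal = (P A0).toReal + (P (A2 \ A0)).toReal := by
        have : P A2 = P A0 + P (A2 \ A0) := by
          conv_lhs => rw [← Set.union_diff_cancel hsub20]
          exact measure_union disjoint_sdiff_self_right (hA2m.diff hA0m)
        rw [this, ENNReal.toReal_add (measure_ne_top _ _) (measure_ne_top _ _)]
      have w1 : (P A1).toReal = (P A0).toReal + (P (A1 \ A0)).toReal := by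
        have : P A1 = P A0 + P (A1 \ A0) := by
          conv_lhs => rw [← Set.union_diff_cancel hsub10]
          exact measure_union disjoint_sdiff_self_right (hA1m.diff hA0m)
        rw [this, ENNReal.toReal_add (measure_ne_top _ _) (measure_ne_top _ _)]
      have e2 : 2 / (2 + b) * (P (A2 \ A0)).toReal
          = 2 / (2 + b) * (P A2).toReal - 2 / (2 + b) * (P A0).toReal := by
        rw [w2]; ring
      have e1 : 2 / (2 + b) * (P (A1 \ A0)).toReal
          = 2 / (2 + b) * (P A1).toReal - 2 / (2 + b) * (P A0).toReal := by
        rw [w1]; ring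
      have ePA : 2 / (2 + b) * (P A0).toReal + 2 / (2 + b) * (P A0).toReal
          + (b - 2) / (2 + b) * (P A0).toReal = (P A0).toReal := by
        field_simp
        ring
      -- induction hypothesis applications
      have ihA2 := ih (t + 2)
      rw [← hA2def] at ihA2
      have ihA1 := ih (t + 1)
      rw [← hA1def] at ihA1
      have ihA0 := ih (t - 1)
      rw [← hA0def] at ihA0
      have m2 := mul_le_mul_of_nonneg_left ihA2 ha0
      have m1 := mul_le_mul_of_nonneg_left ihA1 ha0
      have m0 := mul_le_mul_of_nonneg_left ihA0 ha'0
      -- the right-hand side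
      have hRHS : ((convPow (muB b) (k + 1)) (Set.Iic t)).toReal
          = 2 / (2 + b) * (ν (Set.Iic (t + 2))).toReal
            + 2 / (2 + b) * (ν (Set.Iic (t + 1))).toReal
            + (b - 2) / (2 + b) * (ν (Set.Iic (t - 1))).toReal := by
        have hc : convPow (muB b) (k + 1) = ν.conv (muB b) := by
          rw [convPow, ← hν]
        have ne2 : ENNReal.ofReal (2 / (2 + b)) * ν (Set.Iic (t + 2)) ≠ ⊤ :=
          ENNReal.mul_ne_top ENNReal.ofReal_ne_top (measure_ne_top _ _)
        have ne1 : ENNReal.ofReal (2 / (2 + b)) * ν (Set.Iic (t + 1)) ≠ ⊤ :=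
          ENNReal.mul_ne_top ENNReal.ofReal_ne_top (measure_ne_top _ _)
        have ne0 : ENNReal.ofReal ((b - 2) / (2 + b)) * ν (Set.Iic (t - 1)) ≠ ⊤ :=
          ENNReal.mul_ne_top ENNReal.ofReal_ne_top (measure_ne_top _ _)
        rw [hc, conv_muB_Iic, ENNReal.toReal_add (ENNReal.add_ne_top.2 ⟨ne2, ne1⟩) ne0,
          ENNReal.toReal_add ne2 ne1, ENNReal.toReal_mul, ENNReal.toReal_mul,
          ENNReal.toReal_mul, ENNReal.toReal_ofReal ha0, ENNReal.toReal_ofReal ha'0]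
      rw [hRHS, hXdecomp]
      linarith [hsplit2, hsplit1, hpart, c2, c1, e2, e1, ePA, m2, m1, m0]
  -- convert to ENNReal
  haveI : IsFiniteMeasure (convPow (muB b) n) := convPow_finite _ n
  have := key n t
  rwa [ENNReal.toReal_le_toReal (measure_ne_top _ _) (measure_ne_top _ _)] at this
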